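/- (Reproducing kernel property.) Assume S_μ ∩ ℝ = ∅ and let A♯ be a self-adjoint extension of A with eigenvalues {x_n} and orthogonal eigenprojections P_n. Equip Ĥ_μ := {φ̂ : φ ∈ H} with the inner product ⟨f, g⟩ := Σ_n ⟨P_n μ, μ⟩ · conj(f(x_n)) · g(x_n). Then Ĥ_μ is a Hilbert space with continuous point evaluations, and k(z, w) := ⟨ξ(z), ξ(w)⟩ is its reproducing kernel: for every f ∈ Ĥ_μ and every w ∈ ℂ ∖ S_μ, ⟨k(·, w), f⟩ = f(w). -/

import Mathlib

open scoped ComplexConjugate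
open Complex

noncomputable section

variable {H : Type*} [NormedAddCommGroup H] [InnerProductSpace ℂ H] [CompleteSpace H]

local notation "⟪" x ", " y "⟫" => @inner ℂ _ _ x y

/-- The range of `T - z·I`, as a subset of `H`. -/
def ranShift (T : H →ₗ.[ℂ] H) (z : ℂ) : Set H :=
  Set.range fun φ : T.domain => T φ - z • (φ : H)

/-- `ψ` belongs to the kernel of `T - z·I`. -/
def InKerShift (T : H →ₗ.[ℂ] H) (z : ℂ) (ψ : H) : Prop :=
  ∃ h : ψ ∈ T.domain, T ⟨ψ, h⟩ = z • ψ

/-- `H = ran(A - z·I) ∔ span{μ}` (direct algebraic sum): every vector has a unique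
decomposition `v = r + c • μ` with `r ∈ ran(A - z·I)`. -/
def GaugeSplit (A : H →ₗ.[ℂ] H) (μ : H) (z : ℂ) : Prop :=
  ∀ v : H, ∃! c : ℂ, v - c • μ ∈ ranShift A z

/-- The exceptional set `S_μ`. -/
def Smu (A : H →ₗ.[ℂ] H) (μ : H) : Set ℂ := {z | ¬ GaugeSplit A μ z}

/-- `A` is simple: `⋂_{Im z ≠ 0} ran(A - z·I) = {0}`. -/
def IsSimpleOp (A : H →ₗ.[ℂ] H) : Prop :=
  (⋂ z ∈ {w : ℂ | w.im ≠ 0}, ranShift A z) = ({0} : Set H)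

/-- `A` is regular: every `z ∈ ℂ` is a point of regular type, i.e. `A - z·I` has a
bounded inverse on its range. -/
def IsRegularOp (A : H →ₗ.[ℂ] H) : Prop :=
  ∀ z : ℂ, ∃ c : ℝ, 0 < c ∧ ∀ φ : A.domain, c * ‖(φ : H)‖ ≤ ‖A φ - z • (φ : H)‖

/-- `A` has deficiency indices `(1,1)`: for every `z ∈ ℂ`, the kernel of `A* - z·I`
is spanned by a single nonzero vector. -/
def DefIndicesOneOne (A : H →ₗ.[ℂ] H) : Prop :=
  ∀ z : ℂ, ∃ v : H, v ≠ 0 ∧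
    {ψ : H | InKerShift A.adjoint z ψ} = {w : H | ∃ c : ℂ, w = c • v}

/-- `A` is symmetric. -/
def IsSymmetricPOp (A : H →ₗ.[ℂ] H) : Prop :=
  ∀ x y : A.domain, ⟪(A x : H), (y : H)⟫ = ⟪(x : H), (A y : H)⟫

/-- The data of a densely defined, closed, symmetric, simple, regular operator with
deficiency indices (1,1): the setting of Krein's theory. -/
structure KreinOp (H : Type*) [NormedAddCommGroup H] [InnerProductSpace ℂ H]
    [CompleteSpace H] where
  A : H →ₗ.[ℂ] H
  dense : Dense (A.domain : Set H)
  closed : A.IsClosed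
  symm : IsSymmetricPOp A
  simple : IsSimpleOp A
  regular : IsRegularOp A
  defOneOne : DefIndicesOneOne A

/-- `B` is a self-adjoint extension of `A` (within `H`). -/
def IsSAExt (A B : H →ₗ.[ℂ] H) : Prop :=
  A ≤ B ∧ IsSelfAdjoint B

/-- `R z` is, for every `z ∈ res`, the (everywhere defined, bounded) inverse of `B - z·I`;
in particular `res ⊆ ℂ ∖ Sp(B)`. -/
def IsResolventOn (B : H →ₗ.[ℂ] H) (res : Set ℂ) (R : ℂ → H →L[ℂ] H) : Prop :=
  ∀ z ∈ res, (∀ v : H, ∃ h : R z v ∈ B.domain, B ⟨R z v, h⟩ - z • R z v = v)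
    ∧ ∀ φ : B.domain, R z ((B φ : H) - z • (φ : H)) = (φ : H)

/-- `ψ(z) = ψ₀ + (z - z₀)(B - z·I)⁻¹ ψ₀`. -/
def psiFun (R : ℂ → H →L[ℂ] H) (z₀ : ℂ) (ψ₀ : H) (z : ℂ) : H :=
  ψ₀ + (z - z₀) • R z ψ₀

/-- `ξ(z) = ψ(z̄) / ⟪μ, ψ(z̄)⟫`. -/
def xiFun (μ : H) (R : ℂ → H →L[ℂ] H) (z₀ : ℂ) (ψ₀ : H) (z : ℂ) : H :=
  (⟪μ, psiFun R z₀ ψ₀ (conj z)⟫)⁻¹ • psiFun R z₀ ψ₀ (conj z)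

/-- `P` is the orthogonal projection onto `Ker(B - x·I)`. -/
def IsEigenProjection (B : H →ₗ.[ℂ] H) (x : ℝ) (P : H →L[ℂ] H) : Prop :=
  IsSelfAdjoint P ∧ (∀ v : H, P (P v) = P v) ∧ ∀ v : H, (P v = v ↔ InKerShift B (x : ℂ) v)


/-- **Reproducing kernel property.** Assume `S_μ ∩ ℝ = ∅` and let `A♯` have
eigenvalues `{x n}` with orthogonal eigenprojections `{P n}`, `Σ_n P n = I` strongly. Equip
`Ĥ_μ = {φ̂ : φ ∈ H}` with `⟪f, g⟫ := Σ_n ⟪P_n μ, μ⟫ conj(f(x n)) g(x n)`. Then this inner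
product reproduces the inner product of `H` (so `Ĥ_μ` is a Hilbert space), point
evaluations are continuous, and `k(z,w) = ⟪ξ(z), ξ(w)⟫` is the reproducing kernel:
`⟪k(·,w), φ̂⟫ = φ̂(w)` for every `φ ∈ H` and `w ∈ ℂ ∖ S_μ`. -/
theorem statement11 [TopologicalSpace.SeparableSpace H]
    (S : KreinOp H)
    (B : H →ₗ.[ℂ] H) (hB : IsSAExt S.A B)
    (ι : Type) [Countable ι]
    (x : ι → ℝ) (hxinj : Function.Injective x)
    (P : ι → H →L[ℂ] H) (hP : ∀ n, IsEigenProjection B (x n) (P n))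
    (hsum : ∀ v : H, HasSum (fun n => P n v) v)
    (B' : H →ₗ.[ℂ] H) (hB' : IsSAExt S.A B')
    (res' : Set ℂ) (R' : ℂ → H →L[ℂ] H) (hR' : IsResolventOn B' res' R')
    (z₀ : ℂ) (hz₀ : z₀ ∈ res')
    (ψ₀ : H) (hψ₀ne : ψ₀ ≠ 0) (hψ₀ : InKerShift S.A.adjoint z₀ ψ₀)
    (μ : H) (hSmuR : ∀ t : ℝ, (t : ℂ) ∉ Smu S.A μ)
    (hxres' : ∀ n, ((x n : ℝ) : ℂ) ∈ res') :
    (∀ φ η : H,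
      HasSum
        (fun n =>
          ⟪P n μ, μ⟫ * conj (⟪xiFun μ R' z₀ ψ₀ ((x n : ℝ) : ℂ), φ⟫)
            * ⟪xiFun μ R' z₀ ψ₀ ((x n : ℝ) : ℂ), η⟫)
        ⟪φ, η⟫)
    ∧ (∀ (φ : H) (w : ℂ), w ∉ Smu S.A μ → conj w ∈ res' →
        ‖⟪xiFun μ R' z₀ ψ₀ w, φ⟫‖ ≤ ‖xiFun μ R' z₀ ψ₀ w‖ * ‖φ‖)
    ∧ ∀ (φ : H) (w : ℂ), w ∉ Smu S.A μ → conj w ∈ res' →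
        HasSum
          (fun n =>
            ⟪P n μ, μ⟫
              * conj (⟪xiFun μ R' z₀ ψ₀ ((x n : ℝ) : ℂ), xiFun μ R' z₀ ψ₀ w⟫)
              * ⟪xiFun μ R' z₀ ψ₀ ((x n : ℝ) : ℂ), φ⟫)
          ⟪xiFun μ R' z₀ ψ₀ w, φ⟫ := by
  classical
  have hAdense : Dense (S.A.domain : Set H) := S.dense
  have hBsa : B.adjoint = B := hB.2
  have hB'sa : B'.adjoint = B' := hB'.2
  -- symmetry of a self-adjoint LinearPMap
  have symmOf : ∀ (C : H →ₗ.[ℂ] H), C.adjoint = C →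
      ∀ u v : C.domain, ⟪(C u : H), (v : H)⟫ = ⟪(u : H), (C v : H)⟫ := by
    intro C hC u v
    have hd : Dense (C.domain : Set H) := IsSelfAdjoint.dense_domain hC
    have hle : C ≤ C.adjoint := le_of_eq hC.symm
    have h := LinearPMap.adjoint_isFormalAdjoint hd (⟨(u : H), hle.1 u.2⟩ : C.adjoint.domain) v
    rwa [← hle.2 (x := u) (y := ⟨(u : H), hle.1 u.2⟩) rfl] at h
  -- a self-adjoint extension of A is contained in A†
  have leAdj : ∀ (C : H →ₗ.[ℂ] H), IsSAExt S.A C → C ≤ S.A.adjoint := by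
    intro C hC
    refine LinearPMap.IsFormalAdjoint.le_adjoint hAdense ?_
    intro u v
    have h1 : S.A u = C ⟨(u : H), hC.1.1 u.2⟩ := hC.1.2 rfl
    rw [h1]
    exact symmOf C hC.2 _ v
  have hBle : B ≤ S.A.adjoint := leAdj B hB
  have hB'le : B' ≤ S.A.adjoint := leAdj B' hB'
  -- resolvent basics
  have hker : ∀ z ∈ res', InKerShift S.A.adjoint z (psiFun R' z₀ ψ₀ z) := by
    intro z hz
    obtain ⟨hu, huv⟩ := (hR' z hz).1 ψ₀
    set u : H := R' z ψ₀ with hudef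
    have huA : u ∈ S.A.adjoint.domain := hB'le.1 hu
    have huval : S.A.adjoint ⟨u, huA⟩ = z • u + ψ₀ := by
      rw [← hB'le.2 (x := ⟨u, hu⟩) (y := ⟨u, huA⟩) rfl]
      have := huv
      rw [sub_eq_iff_eq_add] at this
      rw [this]; exact add_comm _ _
    obtain ⟨h0, h0v⟩ := hψ₀
    have hmem : psiFun R' z₀ ψ₀ z ∈ S.A.adjoint.domain := by
      exact S.A.adjoint.domain.add_mem h0 (S.A.adjoint.domain.smul_mem _ huA)
    refine ⟨hmem, ?_⟩
    have heq : (⟨psiFun R' z₀ ψ₀ z, hmem⟩ : S.A.adjoint.domain)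
        = ⟨ψ₀, h0⟩ + (z - z₀) • ⟨u, huA⟩ := by
      ext; simp [psiFun, hudef]
    rw [heq, S.A.adjoint.map_add, S.A.adjoint.map_smul, h0v, huval, psiFun]
    module
  have hpsine : ∀ z ∈ res', psiFun R' z₀ ψ₀ z ≠ 0 := by
    intro z hz hzero
    obtain ⟨hu, huv⟩ := (hR' z hz).1 ψ₀
    have hpsi0 : ψ₀ = -((z - z₀) • R' z ψ₀) := by
      have h := hzero
      rw [psiFun] at h
      linear_combination (norm := module) h
    have hBu : (B' ⟨R' z ψ₀, hu⟩ : H) = z₀ • R' z ψ₀ := by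
      rw [sub_eq_iff_eq_add] at huv
      rw [huv]
      linear_combination (norm := module) hpsi0
    have h2 := (hR' z₀ hz₀).2 ⟨R' z ψ₀, hu⟩
    rw [hBu] at h2
    simp only [sub_self, map_zero] at h2
    apply hψ₀ne
    rw [hpsi0, ← h2]
    simp
  -- orthogonality of kernel vectors to the range
  have horth : ∀ (t : ℝ) (ψ : H), InKerShift S.A.adjoint (t : ℂ) ψ →
      ∀ r ∈ ranShift S.A (t : ℂ), ⟪ψ, r⟫ = 0 := by
    intro t ψ hψ r hr
    obtain ⟨hm, hval⟩ := hψ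
    obtain ⟨φ, rfl⟩ := hr
    have h1 : ⟪(S.A.adjoint ⟨ψ, hm⟩ : H), (φ : H)⟫ = ⟪ψ, (S.A φ : H)⟫ :=
      LinearPMap.adjoint_isFormalAdjoint hAdense ⟨ψ, hm⟩ φ
    rw [hval] at h1
    rw [inner_sub_right, ← h1, inner_smul_left, inner_smul_right]
    simp [Complex.conj_ofReal]
  -- nonvanishing of the gauge pairing
  have hgauge : ∀ (t : ℝ) (ψ : H), ψ ≠ 0 → InKerShift S.A.adjoint (t : ℂ) ψ →
      ⟪μ, ψ⟫ ≠ 0 := by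
    intro t ψ hne hk
    have hgs : GaugeSplit S.A μ (t : ℂ) := not_not.mp (hSmuR t)
    obtain ⟨c, hc, -⟩ := hgs ψ
    have h0 : ⟪ψ, ψ - c • μ⟫ = 0 := horth t ψ hk _ hc
    rw [inner_sub_right, inner_smul_right] at h0
    have hμψ : ⟪ψ, μ⟫ ≠ 0 := by
      intro h; rw [h] at h0; simp at h0; exact hne h0
    intro h
    apply hμψ
    rw [← inner_conj_symm, h, map_zero]
  -- per-index data
  have keyfact : ∀ (n : ι) (a b : H),
      ⟪P n μ, μ⟫ * conj (⟪xiFun μ R' z₀ ψ₀ ((x n : ℝ) : ℂ), a⟫)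
        * ⟪xiFun μ R' z₀ ψ₀ ((x n : ℝ) : ℂ), b⟫ = ⟪a, P n b⟫ := by
    intro n a b
    set ψn : H := psiFun R' z₀ ψ₀ ((x n : ℝ) : ℂ) with hψndef
    have hxi : xiFun μ R' z₀ ψ₀ ((x n : ℝ) : ℂ) = (⟪μ, ψn⟫)⁻¹ • ψn := by
      rw [xiFun, Complex.conj_ofReal]
    have hkn : InKerShift S.A.adjoint ((x n : ℝ) : ℂ) ψn := hker _ (hxres' n)
    have hne : ψn ≠ 0 := hpsine _ (hxres' n)
    have hd : ⟪μ, ψn⟫ ≠ 0 := hgauge (x n) ψn hne hkn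
    have hN : ⟪ψn, ψn⟫ ≠ 0 := inner_self_ne_zero.mpr hne
    obtain ⟨v, hv0, hvset⟩ := S.defOneOne ((x n : ℝ) : ℂ)
    have hψnv : ∃ c₀ : ℂ, ψn = c₀ • v := by
      have : ψn ∈ {ψ : H | InKerShift S.A.adjoint ((x n : ℝ) : ℂ) ψ} := hkn
      rw [hvset] at this
      exact this
    obtain ⟨c₀, hc₀⟩ := hψnv
    have hc₀ne : c₀ ≠ 0 := by
      intro h; apply hne; rw [hc₀, h, zero_smul]
    have hBtoA : ∀ u : H, InKerShift B ((x n : ℝ) : ℂ) u → ∃ c : ℂ, u = c • ψn := by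
      intro u hu
      obtain ⟨hm, hval⟩ := hu
      have hmA : u ∈ S.A.adjoint.domain := hBle.1 hm
      have huk : InKerShift S.A.adjoint ((x n : ℝ) : ℂ) u := by
        refine ⟨hmA, ?_⟩
        rw [← hBle.2 (x := ⟨u, hm⟩) (y := ⟨u, hmA⟩) rfl]
        exact hval
      have : u ∈ {w : H | ∃ c : ℂ, w = c • v} := by rw [← hvset]; exact huk
      obtain ⟨c, hc⟩ := this
      refine ⟨c * c₀⁻¹, ?_⟩
      rw [hc, hc₀, smul_smul, mul_assoc, inv_mul_cancel₀ hc₀ne, mul_one]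
    obtain ⟨hsa, hidem, hkerP⟩ := hP n
    have hranP : ∀ w : H, ∃ c : ℂ, P n w = c • ψn :=
      fun w => hBtoA _ ((hkerP _).mp (hidem w))
    have hsym : ∀ u w : H, ⟪P n u, w⟫ = ⟪u, P n w⟫ := fun u w => hsa.isSymmetric u w
    by_cases hfix : P n ψn = ψn
    · have hPformula : ∀ w : H, P n w = (⟪ψn, w⟫ / ⟪ψn, ψn⟫) • ψn := by
        intro w
        obtain ⟨c, hc⟩ := hranP w
        have h1 : ⟪ψn, P n w⟫ = c * ⟪ψn, ψn⟫ := by rw [hc, inner_smul_right]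
        have h2 : ⟪ψn, P n w⟫ = ⟪ψn, w⟫ := by rw [← hsym, hfix]
        have hcval : c = ⟪ψn, w⟫ / ⟪ψn, ψn⟫ := by
          rw [eq_div_iff hN, ← h1, h2]
        rw [hc, hcval]
      rw [hxi, hPformula b, hPformula μ]
      simp only [inner_smul_left, inner_smul_right, map_mul, map_inv₀,
        inner_conj_symm, Complex.conj_conj, map_div₀]
      have hd' : ⟪ψn, μ⟫ ≠ 0 := by
        intro h; apply hd; rw [← inner_conj_symm, h, map_zero]
      field_simp
    · have hPψn : P n ψn = 0 := by
        obtain ⟨c, hc⟩ := hranP ψn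
        have hPP : P n (P n ψn) = P n ψn := hidem ψn
        rw [hc, map_smul, hc, smul_smul] at hPP
        have hcc : (c * c - c) • ψn = 0 := by
          rw [sub_smul, hPP, sub_self]
        have : c * c - c = 0 := by
          rcases smul_eq_zero.mp hcc with h | h
          · exact h
          · exact absurd h hne
        have hfac : c * (c - 1) = 0 := by linear_combination this
        rcases mul_eq_zero.mp hfac with h | h
        · rw [hc, h, zero_smul]
        · exact absurd (by rw [hc, sub_eq_zero.mp h, one_smul]) hfix
      have hP0 : ∀ w : H, P n w = 0 := by
        intro w
        obtain ⟨cw, hcw⟩ := hranP w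
        rw [← hidem w, hcw, map_smul, hPψn, smul_zero]
      rw [hP0 μ, hP0 b]
      simp
  refine ⟨?_, ?_, ?_⟩
  · intro φ η
    have h1 : HasSum (fun n => ⟪φ, P n η⟫) ⟪φ, η⟫ := by
      simpa using (hsum η).mapL (innerSL ℂ φ)
    have h2 : (fun n => ⟪P n μ, μ⟫ * conj (⟪xiFun μ R' z₀ ψ₀ ((x n : ℝ) : ℂ), φ⟫)
        * ⟪xiFun μ R' z₀ ψ₀ ((x n : ℝ) : ℂ), η⟫) = fun n => ⟪φ, P n η⟫ :=
      funext fun n => keyfact n φ η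
    rw [h2]; exact h1
  · intro φ w _ _
    exact norm_inner_le_norm _ _
  · intro φ w _ _
    have h1 : HasSum (fun n => ⟪xiFun μ R' z₀ ψ₀ w, P n φ⟫) ⟪xiFun μ R' z₀ ψ₀ w, φ⟫ := by
      simpa using (hsum φ).mapL (innerSL ℂ (xiFun μ R' z₀ ψ₀ w))
    have h2 : (fun n => ⟪P n μ, μ⟫
        * conj (⟪xiFun μ R' z₀ ψ₀ ((x n : ℝ) : ℂ), xiFun μ R' z₀ ψ₀ w⟫)
        * ⟪xiFun μ R' z₀ ψ₀ ((x n : ℝ) : ℂ), φ⟫)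
        = fun n => ⟪xiFun μ R' z₀ ψ₀ w, P n φ⟫ :=
      funext fun n => keyfact n (xiFun μ R' z₀ ψ₀ w) φ
    rw [h2]; exact h1

end
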